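/- Let X be a Cantor space and Φ : Γ × X → X a minimal action of a countable group Γ by homeomorphisms. Then Φ is equicontinuous if and only if for every clopen subset U ⊂ X, the orbit { Φ(g)(U) : g ∈ Γ } of U under the induced action of Γ on the collection of clopen subsets of X is a finite set. -/

import Mathlib

noncomputable section

open Set Topology

/-! ### The group of homeomorphisms -/

namespace Homeomorph

variable {X : Type*} [TopologicalSpace X]

instance instGroupHomeo : Group (X ≃ₜ X) where
  mul f g := g.trans f
  one := Homeomorph.refl X
  inv := Homeomorph.symm
  mul_assoc f g h := rfl
  one_mul f := rfl
  mul_one f := rfl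
  inv_mul_cancel f := Homeomorph.ext fun x => f.symm_apply_apply x

@[simp] theorem mul_apply' (f g : X ≃ₜ X) (x : X) : (f * g) x = f (g x) := rfl
@[simp] theorem one_apply' (x : X) : (1 : X ≃ₜ X) x = x := rfl
@[simp] theorem inv_eq_symm (f : X ≃ₜ X) : f⁻¹ = f.symm := rfl

/-- The uniform topology (topology of uniform convergence, equivalently for a compact
metric space the compact-open topology) on the group of homeomorphisms of a compact
metric space, as the metric topology of the sup-metric. -/
instance instMetricSpaceHomeomorph {Y : Type*} [MetricSpace Y] [CompactSpace Y] :
    MetricSpace (Y ≃ₜ Y) :=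
  MetricSpace.induced (fun h => (⟨h, h.continuous⟩ : C(Y, Y)))
    (fun f g hfg => Homeomorph.ext fun x => congrFun (congrArg ContinuousMap.toFun hfg) x)
    inferInstance

end Homeomorph

namespace Homeomorph

variable {Y : Type*} [MetricSpace Y] [CompactSpace Y]

theorem dist_eq_contMap (f g : Y ≃ₜ Y) :
    dist f g = dist (⟨f, f.continuous⟩ : C(Y, Y)) (⟨g, g.continuous⟩ : C(Y, Y)) := rfl

theorem dist_apply_le (f g : Y ≃ₜ Y) (x : Y) : dist (f x) (g x) ≤ dist f g :=
  ContinuousMap.dist_apply_le_dist (f := (⟨f, f.continuous⟩ : C(Y, Y)))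
    (g := (⟨g, g.continuous⟩ : C(Y, Y))) x

theorem dist_lt_iff' (f g : Y ≃ₜ Y) {C : ℝ} (hC : 0 < C) :
    dist f g < C ↔ ∀ x : Y, dist (f x) (g x) < C := by
  rw [dist_eq_contMap, ContinuousMap.dist_lt_iff hC]
  rfl

instance : IsTopologicalGroup (Y ≃ₜ Y) where
  continuous_mul := by
    rw [Metric.continuous_iff]
    rintro ⟨f₀, g₀⟩ ε hε
    obtain ⟨δ₁, hδ₁, H₁⟩ := Metric.uniformContinuous_iff.mp
      (CompactSpace.uniformContinuous_of_continuous f₀.continuous) (ε / 2) (by positivity)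
    refine ⟨min δ₁ (ε / 2), by positivity, ?_⟩
    rintro ⟨f, g⟩ hd
    have hdf : dist f f₀ < ε / 2 := by
      have h' : dist f f₀ ≤ dist ((f, g)) ((f₀, g₀)) := by
        rw [Prod.dist_eq]; exact le_max_left _ _
      exact (h'.trans_lt hd).trans_le (min_le_right _ _)
    have hdg : dist g g₀ < δ₁ := by
      have h' : dist g g₀ ≤ dist ((f, g)) ((f₀, g₀)) := by
        rw [Prod.dist_eq]; exact le_max_right _ _
      exact (h'.trans_lt hd).trans_le (min_le_left _ _)
    rw [dist_lt_iff' _ _ hε]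
    intro x
    have h1 : dist (f (g x)) (f₀ (g x)) < ε / 2 :=
      lt_of_le_of_lt (dist_apply_le f f₀ (g x)) hdf
    have h2 : dist (f₀ (g x)) (f₀ (g₀ x)) < ε / 2 :=
      H₁ (lt_of_le_of_lt (dist_apply_le g g₀ x) hdg)
    calc dist ((f * g) x) ((f₀ * g₀) x) ≤ dist (f (g x)) (f₀ (g x)) + dist (f₀ (g x)) (f₀ (g₀ x)) :=
          dist_triangle _ _ _
      _ < ε / 2 + ε / 2 := by exact add_lt_add h1 h2
      _ = ε := by ring
  continuous_inv := by
    rw [Metric.continuous_iff]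
    intro f₀ ε hε
    obtain ⟨δ, hδ, H⟩ := Metric.uniformContinuous_iff.mp
      (CompactSpace.uniformContinuous_of_continuous f₀.symm.continuous) ε hε
    refine ⟨δ, hδ, ?_⟩
    intro g hdg
    rw [dist_lt_iff' _ _ hε]
    intro y
    have key : dist (g (g.symm y)) (f₀ (g.symm y)) < δ :=
      lt_of_le_of_lt (dist_apply_le g f₀ (g.symm y)) hdg
    have h2 := H key
    have h3 : dist (f₀.symm (g (g.symm y))) (f₀.symm (f₀ (g.symm y))) < ε := h2
    rw [Homeomorph.apply_symm_apply, Homeomorph.symm_apply_apply] at h3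
    rw [dist_comm] at h3
    simpa using h3
end Homeomorph

/-! ### Steinitz (supernatural) numbers -/

/-- A Steinitz number: a formal product of primes with exponents in `ℕ∞`. -/
def SteinitzNum : Type := Nat.Primes → ℕ∞

namespace SteinitzNum

/-- The Steinitz number associated to a natural number. -/
def ofNat (n : ℕ) : SteinitzNum := fun p => (n.factorization (p : ℕ) : ℕ∞)

/-- Multiplication of Steinitz numbers adds the exponents at each prime. -/
instance : Mul SteinitzNum := ⟨fun a b p => a p + b p⟩

/-- The least common multiple of a collection of positive integers, as a Steinitz number:
its exponent at `p` is the supremum of the `p`-adic valuations of the elements. -/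
def lcmSet (S : Set ℕ) : SteinitzNum := fun p => ⨆ n ∈ S, (n.factorization (p : ℕ) : ℕ∞)

/-- Two Steinitz numbers are asymptotically equivalent if they agree after multiplication
by positive integers. -/
def AsympEquiv (a b : SteinitzNum) : Prop :=
  ∃ n₀ m₀ : ℕ, 0 < n₀ ∧ 0 < m₀ ∧ ofNat n₀ * a = ofNat m₀ * b

/-- The prime spectrum of a Steinitz number: primes with nonzero exponent. -/
def primeSpectrum (a : SteinitzNum) : Set Nat.Primes := { p | a p ≠ 0 }

/-- The finite prime spectrum: primes with finite nonzero exponent. -/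
def finitePrimeSpectrum (a : SteinitzNum) : Set Nat.Primes := { p | a p ≠ 0 ∧ a p ≠ ⊤ }

/-- The infinite prime spectrum: primes with infinite exponent. -/
def infinitePrimeSpectrum (a : SteinitzNum) : Set Nat.Primes := { p | a p = ⊤ }

end SteinitzNum

/-! ### Steinitz orders for topological groups -/

/-- The Steinitz order of a topological group: the LCM of the orders of the finite
quotients `G/N` over open normal subgroups `N ⊆ G`. -/
def steinitzOrder (G : Type*) [Group G] [TopologicalSpace G] : SteinitzNum :=
  SteinitzNum.lcmSet
    { n | ∃ N : Subgroup G, N.Normal ∧ IsOpen (N : Set G) ∧ n = Nat.card (G ⧸ N) }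

/-- The Steinitz order of a subgroup `D` of a topological group `G`: the LCM of the
cardinalities `|D/(N ∩ D)|` over open normal subgroups `N ⊆ G`. -/
def steinitzOrderOfSubgroup {G : Type*} [Group G] [TopologicalSpace G] (D : Subgroup G) :
    SteinitzNum :=
  SteinitzNum.lcmSet
    { n | ∃ N : Subgroup G, N.Normal ∧ IsOpen (N : Set G) ∧
        n = Nat.card (↥D ⧸ (N.subgroupOf D)) }

/-- The relative Steinitz order of a subgroup `D` of a topological group `G`: the LCM of the
cardinalities `|G/(N · D)|` over open normal subgroups `N ⊆ G`. -/
def steinitzRelativeOrder {G : Type*} [Group G] [TopologicalSpace G] (D : Subgroup G) :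
    SteinitzNum :=
  SteinitzNum.lcmSet
    { n | ∃ N : Subgroup G, N.Normal ∧ IsOpen (N : Set G) ∧ n = Nat.card (G ⧸ (N ⊔ D)) }

/-- A profinite (compact Hausdorff totally disconnected) topological group is topologically
Noetherian if every increasing chain of closed subgroups has a maximal element. -/
def TopologicallyNoetherian (G : Type*) [Group G] [TopologicalSpace G] : Prop :=
  ∀ c : ℕ → Subgroup G, (∀ i, IsClosed (c i : Set G)) → Monotone c → ∃ i₀, ∀ i, c i ≤ c i₀

/-! ### Cantor actions -/

section CantorActions

variable {X : Type*} [MetricSpace X] {Γ : Type*} [Group Γ]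

/-- An action is minimal if every orbit is dense. -/
def IsMinimalAction (Φ : Γ →* (X ≃ₜ X)) : Prop :=
  ∀ x : X, Dense (Set.range fun g : Γ => Φ g x)

/-- An action is equicontinuous if it satisfies the uniform `ε`-`δ` condition with respect
to the metric. -/
def IsEquicontinuousAction (Φ : Γ →* (X ≃ₜ X)) : Prop :=
  ∀ ε : ℝ, 0 < ε → ∃ δ : ℝ, 0 < δ ∧
    ∀ x y : X, dist x y < δ → ∀ g : Γ, dist (Φ g x) (Φ g y) < ε

variable [CompactSpace X]

/-- `G(Φ)`: the closure of the image of `Γ` in `Homeo(X)`, in the uniform topology. -/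
def profiniteClosure (Φ : Γ →* (X ≃ₜ X)) : Subgroup (X ≃ₜ X) :=
  Φ.range.topologicalClosure

/-- The discriminant group: the isotropy subgroup of `G(Φ)` at `x`. -/
def discriminant (Φ : Γ →* (X ≃ₜ X)) (x : X) : Subgroup (profiniteClosure Φ) where
  carrier := { h | (h : X ≃ₜ X) x = x }
  one_mem' := rfl
  mul_mem' := by
    intro a b ha hb
    simp only [Set.mem_setOf_eq] at *
    show ((a : X ≃ₜ X) * (b : X ≃ₜ X)) x = x
    rw [Homeomorph.mul_apply', hb, ha]
  inv_mem' := by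
    intro a ha
    simp only [Set.mem_setOf_eq] at *
    show ((a : X ≃ₜ X)⁻¹) x = x
    rw [Homeomorph.inv_eq_symm]
    conv_lhs => rw [← ha]
    exact Homeomorph.symm_apply_apply _ _

/-- The Steinitz order `Π[G(Φ)]` of a Cantor action. -/
def steinitzOrderAction (Φ : Γ →* (X ≃ₜ X)) : SteinitzNum :=
  steinitzOrder ↥(profiniteClosure Φ)

/-- The Steinitz order `Π[D(Φ,x)]` of the discriminant of a Cantor action. -/
def steinitzOrderDisc (Φ : Γ →* (X ≃ₜ X)) (x : X) : SteinitzNum :=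
  steinitzOrderOfSubgroup (discriminant Φ x)

/-- The relative Steinitz order `Π[G(Φ) : D(Φ,x)]` of a Cantor action. -/
def steinitzOrderRel (Φ : Γ →* (X ≃ₜ X)) (x : X) : SteinitzNum :=
  steinitzRelativeOrder (discriminant Φ x)

end CantorActions

/-! ### Adapted sets, holonomy and return equivalence -/

section Adapted

variable {X : Type*} [MetricSpace X] {Γ : Type*} [Group Γ]

/-- A nonempty clopen subset `U ⊆ X` is adapted to the action `Φ` if every group element
either fixes `U` or moves it entirely off of itself. -/
def IsAdaptedSet (Φ : Γ →* (X ≃ₜ X)) (U : Set X) : Prop :=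
  U.Nonempty ∧ IsClopen U ∧ ∀ g : Γ, ((Φ g) '' U ∩ U).Nonempty → (Φ g) '' U = U

/-- The stabilizer subgroup `Γ_U` of an adapted set. -/
def adaptedStabilizer (Φ : Γ →* (X ≃ₜ X)) (U : Set X) : Subgroup Γ where
  carrier := { g | (Φ g) '' U = U }
  one_mem' := by simp <;> exact Set.image_id U
  mul_mem' := by
    intro a b ha hb
    simp only [Set.mem_setOf_eq] at *
    rw [map_mul]
    show ((Φ a) * (Φ b)) '' U = U
    have : (((Φ a) * (Φ b) : X ≃ₜ X) : X → X) = (Φ a) ∘ (Φ b) := rfl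
    rw [this, Set.image_comp, hb, ha]
  inv_mem' := by
    intro a ha
    simp only [Set.mem_setOf_eq] at *
    rw [map_inv, Homeomorph.inv_eq_symm]
    conv_lhs => rw [← ha]
    rw [← Set.image_comp]
    simp

/-- The homeomorphism of an invariant set induced by a homeomorphism of `X`. -/
def restrictHomeo (h : X ≃ₜ X) {U : Set X} (hU : h '' U = U) : U ≃ₜ U :=
  (h.image U).trans (Homeomorph.setCongr hU)

@[simp] theorem restrictHomeo_coe (h : X ≃ₜ X) {U : Set X} (hU : h '' U = U) (x : U) :
    (restrictHomeo h hU x : X) = h x := rfl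

/-- The holonomy homomorphism of an adapted set: restriction of the stabilizer to `U`. -/
def holonomyHom (Φ : Γ →* (X ≃ₜ X)) (U : Set X) :
    adaptedStabilizer Φ U →* (↥U ≃ₜ ↥U) where
  toFun g := restrictHomeo (Φ (g : Γ)) g.2
  map_one' := by
    ext x
    show ((restrictHomeo (Φ ((1 : adaptedStabilizer Φ U) : Γ)) _ x : X) = _)
    simp
  map_mul' := by
    intro a b
    ext x
    show ((restrictHomeo (Φ ((a * b : adaptedStabilizer Φ U) : Γ)) _ x : X) = _)
    simp only [restrictHomeo_coe, Subgroup.coe_mul, map_mul]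
    rfl

/-- The holonomy group `H_U` of an adapted set: the image of the stabilizer in `Homeo(U)`. -/
def holonomyGroup (Φ : Γ →* (X ≃ₜ X)) (U : Set X) : Subgroup (↥U ≃ₜ ↥U) :=
  (holonomyHom Φ U).range

end Adapted

/-- Two Cantor actions are return equivalent if they admit adapted sets whose holonomy
actions are isomorphic, via a homeomorphism between the adapted sets together with a
compatible isomorphism of the holonomy groups. -/
def ReturnEquivalent
    {X₁ : Type*} [MetricSpace X₁] {Γ₁ : Type*} [Group Γ₁]
    {X₂ : Type*} [MetricSpace X₂] {Γ₂ : Type*} [Group Γ₂]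
    (Φ₁ : Γ₁ →* (X₁ ≃ₜ X₁)) (Φ₂ : Γ₂ →* (X₂ ≃ₜ X₂)) : Prop :=
  ∃ (U₁ : Set X₁) (U₂ : Set X₂), IsAdaptedSet Φ₁ U₁ ∧ IsAdaptedSet Φ₂ U₂ ∧
    ∃ (h : ↥U₁ ≃ₜ ↥U₂) (θ : holonomyGroup Φ₁ U₁ ≃* holonomyGroup Φ₂ U₂),
      ∀ k : holonomyGroup Φ₁ U₁,
        ((θ k : ↥U₂ ≃ₜ ↥U₂)) = h.symm.trans (((k : ↥U₁ ≃ₜ ↥U₁)).trans h)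

section Regularity

variable {X : Type*} [MetricSpace X]

/-- An action of a group `H` on `X` through a homomorphism `ρ : H →* Homeo(X)` is locally
quasi-analytic if there is `ε > 0` so that for every nonempty open `U` of diameter less
than `ε`, any element acting as the identity on a nonempty open subset `V ⊆ U` with
`ρ g (V) = V` acts as the identity on all of `U`. -/
def IsLocallyQuasiAnalytic {H : Type*} [Group H] (ρ : H →* (X ≃ₜ X)) : Prop :=
  ∃ ε : ℝ, 0 < ε ∧ ∀ U : Set X, IsOpen U → U.Nonempty → Metric.diam U < ε →
    ∀ V : Set X, V ⊆ U → IsOpen V → V.Nonempty →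
      ∀ g : H, (ρ g) '' V = V → (∀ x ∈ V, ρ g x = x) → ∀ x ∈ U, ρ g x = x

variable [CompactSpace X] {Γ : Type*} [Group Γ]

/-- A Cantor action is stable if the induced action of `G(Φ)` on `X` is locally
quasi-analytic; otherwise it is wild. -/
def IsStableAction (Φ : Γ →* (X ≃ₜ X)) : Prop :=
  IsLocallyQuasiAnalytic (profiniteClosure Φ).subtype

/-- An action is topologically free if the set of points fixed by some nontrivial group
element is meagre. -/
def IsTopologicallyFree (Φ : Γ →* (X ≃ₜ X)) : Prop :=
  IsMeagre { x : X | ∃ g : Γ, g ≠ 1 ∧ Φ g x = x }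

end Regularity

section AuxLemmas

/-- Membership in the image of a set under a homeomorphism. -/
lemma mem_image_homeo {X : Type*} [TopologicalSpace X] (h : X ≃ₜ X) (U : Set X) (y : X) :
    y ∈ h '' U ↔ h.symm y ∈ U :=
  ⟨fun ⟨x, hx, hxy⟩ => by rw [← hxy, h.symm_apply_apply]; exact hx,
   fun hy => ⟨h.symm y, hy, h.apply_symm_apply y⟩⟩

/-- A clopen set in a compact metric space has a positive "margin": points sufficiently
close to the set belong to it. -/
lemma clopen_margin {X : Type*} [MetricSpace X] [CompactSpace X] {U : Set X}
    (hU : IsClopen U) :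
    ∃ δ : ℝ, 0 < δ ∧ ∀ x y : X, dist x y < δ → x ∈ U → y ∈ U := by
  obtain ⟨δ, hδ, h⟩ :=
    (hU.isClosed.isCompact).exists_thickening_subset_open hU.isOpen subset_rfl
  exact ⟨δ, hδ, fun x y hxy hx =>
    h (Metric.mem_thickening_iff.mpr ⟨x, hx, by rwa [dist_comm]⟩)⟩

/-- Choose a common positive parameter over a finite family, for a downward-monotone
property. -/
lemma exists_pos_forall_of_finite {α : Type*} {s : Set α} (hs : s.Finite)
    (p : α → ℝ → Prop) (hmono : ∀ a δ δ', δ ≤ δ' → p a δ' → p a δ)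
    (h : ∀ a ∈ s, ∃ δ : ℝ, 0 < δ ∧ p a δ) :
    ∃ δ : ℝ, 0 < δ ∧ ∀ a ∈ s, p a δ := by
  revert h
  refine Set.Finite.induction_on
    (motive := fun s _ => (∀ a ∈ s, ∃ δ : ℝ, 0 < δ ∧ p a δ) →
      ∃ δ : ℝ, 0 < δ ∧ ∀ a ∈ s, p a δ) s hs ?_ ?_
  · exact fun _ => ⟨1, one_pos, fun a ha => absurd ha (Set.notMem_empty a)⟩
  · rintro a s - - ih h
    obtain ⟨δ₁, hδ₁, hp₁⟩ := h a (Set.mem_insert a s)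
    obtain ⟨δ₂, hδ₂, hp₂⟩ := ih fun b hb => h b (Set.mem_insert_of_mem a hb)
    refine ⟨min δ₁ δ₂, lt_min hδ₁ hδ₂, ?_⟩
    rintro b (rfl | hb)
    · exact hmono b _ _ (min_le_left _ _) hp₁
    · exact hmono b _ _ (min_le_right _ _) (hp₂ b hb)

end AuxLemmas

/-- A minimal action of a countable group on a Cantor space is
equicontinuous if and only if the orbit of every clopen set under the induced action
on clopen subsets is finite. -/
theorem equicontinuous_iff_finite_clopen_orbits
    {X : Type*} [MetricSpace X] [CompactSpace X] [Nonempty X] [TotallyDisconnectedSpace X]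
    (hperf : Perfect (Set.univ : Set X))
    {Γ : Type*} [Group Γ] [Countable Γ] (Φ : Γ →* (X ≃ₜ X))
    (hmin : IsMinimalAction Φ) :
    IsEquicontinuousAction Φ ↔
      ∀ U : Set X, IsClopen U → (Set.range fun g : Γ => (Φ g) '' U).Finite := by
  constructor
  · -- Equicontinuous ⇒ finite clopen orbits
    intro heq U hU
    obtain ⟨δ₀, hδ₀, hmargin⟩ := clopen_margin hU
    obtain ⟨δ, hδ, hd⟩ := heq δ₀ hδ₀
    -- key: points within δ of each other are simultaneously in or out of each Φ g '' U
    have key : ∀ (g : Γ) (y y' : X), dist y y' < δ → y ∈ Φ g '' U → y' ∈ Φ g '' U := by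
      intro g y y' hdist hy
      rw [mem_image_homeo] at hy ⊢
      have h1 : dist (Φ g⁻¹ y) (Φ g⁻¹ y') < δ₀ := hd y y' hdist g⁻¹
      rw [map_inv, Homeomorph.inv_eq_symm] at h1
      exact hmargin _ _ h1 hy
    -- finite cover of X by δ/2-balls
    obtain ⟨t, ht⟩ := isCompact_univ.elim_finite_subcover
      (fun c : X => Metric.ball c (δ / 2)) (fun c => Metric.isOpen_ball)
      (fun y _ => Set.mem_iUnion.mpr ⟨y, Metric.mem_ball_self (by positivity)⟩)
    -- each set in the orbit is determined by its trace on the centers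
    apply Set.Finite.of_finite_image (f := fun V => (↑t : Set X) ∩ V)
    · exact (t.finite_toSet.finite_subsets).subset
        (by rintro _ ⟨V, _, rfl⟩; exact Set.inter_subset_left)
    · rintro V ⟨g, rfl⟩ V' ⟨g', rfl⟩ hE
      have hE' : (↑t : Set X) ∩ Φ g '' U = (↑t : Set X) ∩ Φ g' '' U := hE
      have step : ∀ (g : Γ) (y : X), y ∈ Φ g '' U →
          ∃ c ∈ t, c ∈ Φ g '' U ∧ dist c y < δ := by
        intro g y hy
        obtain ⟨c, hct, hyc⟩ := Set.mem_iUnion₂.mp (ht (Set.mem_univ y))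
        have hdyc : dist y c < δ := lt_of_lt_of_le (Metric.mem_ball.mp hyc) (by linarith)
        exact ⟨c, hct, key g y c hdyc hy, by rwa [dist_comm]⟩
      ext y
      constructor
      · intro hy
        obtain ⟨c, hct, hcU, hcy⟩ := step g y hy
        have hc' : c ∈ Φ g' '' U := by
          have : c ∈ (↑t : Set X) ∩ Φ g '' U := ⟨hct, hcU⟩
          rw [hE'] at this
          exact this.2
        exact key g' c y hcy hc'
      · intro hy
        obtain ⟨c, hct, hcU, hcy⟩ := step g' y hy
        have hc' : c ∈ Φ g '' U := by
          have : c ∈ (↑t : Set X) ∩ Φ g' '' U := ⟨hct, hcU⟩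
          rw [← hE'] at this
          exact this.2
        exact key g c y hcy hc'
  · -- Finite clopen orbits ⇒ equicontinuous
    intro hfin ε hε
    -- for each point a small clopen neighborhood inside a ball of radius ε/3
    have hV : ∀ x : X, ∃ V : Set X, IsClopen V ∧ x ∈ V ∧ V ⊆ Metric.ball x (ε / 3) :=
      fun x => compact_exists_isClopen_in_isOpen Metric.isOpen_ball
        (Metric.mem_ball_self (by positivity))
    choose V hVclopen hVmem hVsub using hV
    -- finite subcover
    obtain ⟨t, ht⟩ := isCompact_univ.elim_finite_subcover V
      (fun x => (hVclopen x).isOpen) (fun y _ => Set.mem_iUnion.mpr ⟨y, hVmem y⟩)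
    -- the finite collection of all translates of the covering sets
    set 𝒲 : Set (Set X) := ⋃ x ∈ (↑t : Set X), Set.range fun g : Γ => Φ g '' V x with h𝒲
    have h𝒲fin : 𝒲.Finite :=
      Set.Finite.biUnion t.finite_toSet fun x _ => hfin (V x) (hVclopen x)
    -- a common margin for all sets in 𝒲
    obtain ⟨δ, hδpos, hδ⟩ := exists_pos_forall_of_finite h𝒲fin
      (fun W δ => Metric.thickening δ W ⊆ W)
      (fun W δ δ' hle h => (Metric.thickening_mono hle W).trans h)
      (by
        rintro W hW
        obtain ⟨x, -, g, rfl⟩ := Set.mem_iUnion₂.mp hW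
        have hWcl : IsClopen (Φ g '' V x) := by
          have : Φ g '' V x = (Φ g).symm ⁻¹' V x := by
            ext y; exact mem_image_homeo (Φ g) (V x) y
          rw [this]
          exact (hVclopen x).preimage (Φ g).symm.continuous
        exact (hWcl.isClosed.isCompact).exists_thickening_subset_open hWcl.isOpen
          subset_rfl |>.imp fun δ h => ⟨h.1, h.2⟩)
    refine ⟨δ, hδpos, fun x y hxy g => ?_⟩
    obtain ⟨i, hit, hgx⟩ := Set.mem_iUnion₂.mp (ht (Set.mem_univ (Φ g x)))
    have hxW : x ∈ Φ g⁻¹ '' V i :=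
      ⟨Φ g x, hgx, by rw [map_inv, Homeomorph.inv_eq_symm]; exact (Φ g).symm_apply_apply x⟩
    have hW𝒲 : Φ g⁻¹ '' V i ∈ 𝒲 :=
      Set.mem_iUnion₂.mpr ⟨i, hit, ⟨g⁻¹, rfl⟩⟩
    have hyW : y ∈ Φ g⁻¹ '' V i :=
      hδ _ hW𝒲 (Metric.mem_thickening_iff.mpr ⟨x, hxW, by rwa [dist_comm]⟩)
    obtain ⟨z, hz, hzy⟩ := hyW
    have hgy : Φ g y ∈ V i := by
      rw [← hzy, map_inv, Homeomorph.inv_eq_symm, (Φ g).apply_symm_apply]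
      exact hz
    have h1 : dist (Φ g x) i < ε / 3 := Metric.mem_ball.mp (hVsub i hgx)
    have h2 : dist (Φ g y) i < ε / 3 := Metric.mem_ball.mp (hVsub i hgy)
    calc dist (Φ g x) (Φ g y) ≤ dist (Φ g x) i + dist i (Φ g y) := dist_triangle _ _ _
      _ = dist (Φ g x) i + dist (Φ g y) i := by rw [dist_comm i]
      _ < ε / 3 + ε / 3 := add_lt_add h1 h2
      _ < ε := by linarith
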